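/- Let G be an infinite, connected, locally finite graph, p > p_c^{site}(G), and S ⊆ V. Suppose that for every ε, c with c = 1 - ((1-p)/(1-p_1))^{1-ε'} (for some p_1 ∈ (p_c, p), ε' ∈ (0,1)) and every δ ∈ (0,1), the (p, δ, c)-packing number PK_{p,δ,c}(S) is at least k. Then P_p(S ↮ ∞) ≤ δ(1-c)/c + (1+δ)(1-c)^k. -/

import Mathlib

open MeasureTheory
open scoped ENNReal

namespace Percolation

variable {V : Type*}

/-- The open subgraph of `G` determined by a site configuration `ω : V → Bool`:
an edge is open iff both endpoints are open sites. -/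
def openGraph (G : SimpleGraph V) (ω : V → Bool) : SimpleGraph V where
  Adj u w := G.Adj u w ∧ ω u = true ∧ ω w = true
  symm := ⟨fun u w ⟨h, hu, hw⟩ => ⟨h.symm, hw, hu⟩⟩
  loopless := ⟨fun u ⟨h, _, _⟩ => G.irrefl h⟩

/-- The restriction of `G` to a vertex set `A` (edges with both endpoints in `A`). -/
def restrictGraph (G : SimpleGraph V) (A : Set V) : SimpleGraph V where
  Adj u w := G.Adj u w ∧ u ∈ A ∧ w ∈ A
  symm := ⟨fun u w ⟨h, hu, hw⟩ => ⟨h.symm, hw, hu⟩⟩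
  loopless := ⟨fun u ⟨h, _, _⟩ => G.irrefl h⟩

/-- `v` lies in an infinite open cluster of `G` in configuration `ω`. -/
def ConnInfty (G : SimpleGraph V) (ω : V → Bool) (v : V) : Prop :=
  ω v = true ∧ {u | (openGraph G ω).Reachable v u}.Infinite

/-- `v` is joined to some vertex of `T` by an open path all of whose vertices lie in `A`. -/
def ConnWithin (G : SimpleGraph V) (A : Set V) (ω : V → Bool) (v : V) (T : Set V) : Prop :=
  ∃ u ∈ T, (openGraph (restrictGraph G A) ω).Reachable v u

/-- The ball of radius `D` about `v` for the graph distance of `G`. -/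
def ball (G : SimpleGraph V) (v : V) (D : ℕ) : Set V :=
  {u | G.Reachable v u ∧ G.dist v u ≤ D}

/-- The inner vertex boundary of the ball `B(v,D)`. -/
def innerBoundary (G : SimpleGraph V) (v : V) (D : ℕ) : Set V :=
  {u | u ∈ ball G v D ∧ ∃ w, G.Adj u w ∧ w ∉ ball G v D}

/-- `μ` is the law of i.i.d. Bernoulli(`p`) site percolation: every finite-dimensional
cylinder has the product probability. -/
def IsBernoulli (p : ℝ) [MeasurableSpace (V → Bool)] (μ : Measure (V → Bool)) : Prop :=
  ∀ (F : Finset V) (b : V → Bool),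
    μ {ω | ∀ v ∈ F, ω v = b v} =
      ∏ v ∈ F, ENNReal.ofReal (if b v then p else 1 - p)

/-- Interior vertices of `S`: vertices all of whose neighbors lie in `S`. -/
def interior (G : SimpleGraph V) (S : Set V) : Set V :=
  {v ∈ S | ∀ u, G.Adj v u → u ∈ S}

/-- The event `{v ↔ ∂_V y through S°}`: `v` is joined to a neighbor of `y` by an open path
visiting only interior vertices of `S`. -/
def ConnToNbhd (G : SimpleGraph V) (S : Set V) (v y : V) (ω : V → Bool) : Prop :=
  ∃ x, G.Adj y x ∧ (openGraph (restrictGraph G (interior G S)) ω).Reachable v x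

open scoped Classical in
/-- The functional `φ_p^v(S)` of ZL24, with `P_p` given by the measure `μ`. -/
noncomputable def phi (G : SimpleGraph V) [MeasurableSpace (V → Bool)]
    (μ : Measure (V → Bool)) (v : V) (S : Finset V) : ℝ≥0∞ :=
  ∑ y ∈ S.filter (fun y => ∃ x, G.Adj y x ∧ x ∉ S),
    μ {ω | ConnToNbhd G (↑S) v y ω}

/-- The critical probability of Bernoulli site percolation on `G`. -/
noncomputable def pcSite (G : SimpleGraph V) [MeasurableSpace (V → Bool)] : ℝ :=
  sSup {p : ℝ | p ∈ Set.Icc (0:ℝ) 1 ∧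
    ∀ μ : Measure (V → Bool), IsProbabilityMeasure μ → IsBernoulli p μ →
      ∀ v : V, μ {ω | ConnInfty G ω v} = 0}

/-- The punctured graph `G_{i}`: `G` with the balls `B(w_j, D_j)`, `j < i`, removed. -/
def punctured (G : SimpleGraph V) {k : ℕ} (w : Fin k → V) (D : Fin k → ℕ) (i : ℕ) :
    SimpleGraph V :=
  restrictGraph G (⋃ j ∈ {j : Fin k | (j : ℕ) < i}, ball G (w j) (D j))ᶜ

/-- A `(p,δ,c)`-packing of size `k` in `S` (Definition of the packing number): well-separated
vertices `w_i ∈ S` with radii `D_i` such that in the punctured graph `G_{i-1}` the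
disconnection from `∂_in B(w_i,D_i)` compares to the disconnection from `∞` within a
factor `1+δ`, and `w_i` connects to `∞` with probability at least `c`. -/
def IsPacking (G : SimpleGraph V) [MeasurableSpace (V → Bool)]
    (μ : Measure (V → Bool)) (δ c : ℝ) (S : Set V) (k : ℕ)
    (w : Fin k → V) (D : Fin k → ℕ) : Prop :=
  (∀ i, w i ∈ S) ∧
  (∀ i : Fin k, w i ∉ ⋃ j ∈ {j : Fin k | (j : ℕ) < (i : ℕ)}, ball G (w j) (D j)) ∧
  (∀ i : Fin k,
    μ {ω | ¬ ConnWithin (punctured G w D i) (ball G (w i) (D i)) ω (w i)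
        (innerBoundary G (w i) (D i))} ≤
      μ {ω | ¬ ConnInfty (punctured G w D i) ω (w i)} ∧
    μ {ω | ¬ ConnInfty (punctured G w D i) ω (w i)} ≤
      ENNReal.ofReal (1 + δ) *
        μ {ω | ¬ ConnWithin (punctured G w D i) (ball G (w i) (D i)) ω (w i)
          (innerBoundary G (w i) (D i))} ∧
    ENNReal.ofReal c ≤ μ {ω | ConnInfty (punctured G w D i) ω (w i)})

/-! ### Auxiliary machinery -/

section Determined

variable {V : Type*}

/-- `X` depends only on coordinates in `U`. -/
def Det (U : Set V) (X : Set (V → Bool)) : Prop :=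
  ∀ ⦃ω ω' : V → Bool⦄, (∀ v ∈ U, ω v = ω' v) → ω ∈ X → ω' ∈ X

namespace Det

lemma mono {U U' : Set V} {X : Set (V → Bool)} (h : Det U X) (hU : U ⊆ U') : Det U' X :=
  fun _ _ ha => h (fun v hv => ha v (hU hv))

lemma inter {U : Set V} {X Y : Set (V → Bool)} (hX : Det U X) (hY : Det U Y) :
    Det U (X ∩ Y) := fun _ _ ha hm => ⟨hX ha hm.1, hY ha hm.2⟩

lemma union {U : Set V} {X Y : Set (V → Bool)} (hX : Det U X) (hY : Det U Y) :
    Det U (X ∪ Y) := fun _ _ ha hm => hm.elim (fun h => Or.inl (hX ha h))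
    (fun h => Or.inr (hY ha h))

lemma compl {U : Set V} {X : Set (V → Bool)} (hX : Det U X) : Det U Xᶜ :=
  fun _ω _ω' ha hm hmem => hm (hX (fun v hv => (ha v hv).symm) hmem)

lemma diff {U : Set V} {X Y : Set (V → Bool)} (hX : Det U X) (hY : Det U Y) :
    Det U (X \ Y) := hX.inter hY.compl

lemma iInter2 {ι : Sort*} {κ : ι → Sort*} {U : Set V} {X : ∀ i, κ i → Set (V → Bool)}
    (h : ∀ i j, Det U (X i j)) : Det U (⋂ i, ⋂ j, X i j) := fun _ _ ha hm => by
  simp only [Set.mem_iInter] at hm ⊢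
  exact fun i j => (h i j) ha (hm i j)

open Classical in
lemma coordInter {U₁ U₂ : Set V} {X : Set (V → Bool)} (h₁ : Det U₁ X) (h₂ : Det U₂ X) :
    Det (U₁ ∩ U₂) X := by
  intro ω ω' ha hm
  set ω'' : V → Bool := fun v => if v ∈ U₁ then ω v else ω' v with hω''
  have h1 : ω'' ∈ X := h₁ (fun v hv => by simp [ω'', hv]) hm
  refine h₂ (fun v hv => ?_) h1
  by_cases h : v ∈ U₁
  · simpa [ω'', h] using ha v ⟨h, hv⟩
  · simp [ω'', h]

lemma empty_cases {X : Set (V → Bool)} (h : Det (∅ : Set V) X) :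
    X = ∅ ∨ X = Set.univ := by
  rcases X.eq_empty_or_nonempty with he | ⟨ω, hω⟩
  · exact Or.inl he
  · exact Or.inr (Set.eq_univ_of_forall fun ω' => h (by simp) hω)

end Det

end Determined

lemma nullMeasurableSet_of_add_compl {α : Type*} [MeasurableSpace α] {μ : Measure α}
    {s : Set α} (hfin : μ Set.univ ≠ ∞) (h : μ s + μ sᶜ = μ Set.univ) :
    NullMeasurableSet s μ := by
  set t := toMeasurable μ s with ht
  set t' := toMeasurable μ sᶜ with ht'
  have hts : s ⊆ t := subset_toMeasurable μ s
  have hts' : sᶜ ⊆ t' := subset_toMeasurable μ sᶜ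
  have huniv : t ∪ t' = Set.univ := Set.eq_univ_of_univ_subset
    (by rw [← Set.union_compl_self s]; exact Set.union_subset_union hts hts')
  have hmt : MeasurableSet t := measurableSet_toMeasurable μ s
  have hmt' : MeasurableSet t' := measurableSet_toMeasurable μ sᶜ
  have key : μ (t ∩ t') = 0 := by
    have h1 : μ (t ∪ t') + μ (t ∩ t') = μ t + μ t' := measure_union_add_inter t hmt'
    rw [huniv, measure_toMeasurable, measure_toMeasurable, h] at h1
    have h2 : μ Set.univ + μ (t ∩ t') = μ Set.univ + 0 := by rw [add_zero]; exact h1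
    exact (ENNReal.add_right_inj hfin).1 h2
  refine ⟨t, hmt, ?_⟩
  rw [MeasureTheory.ae_eq_set]
  constructor
  · have : s \ t = ∅ := Set.diff_eq_empty.2 hts
    simp [this]
  · refine measure_mono_null (fun x hx => ?_) key
    exact ⟨hx.1, hts' hx.2⟩

section Bernoulli

variable {V : Type*} [MeasurableSpace (V → Bool)] {μ : Measure (V → Bool)}
  [IsProbabilityMeasure μ] {p : ℝ}

/-- weight of a single coordinate -/
noncomputable def w0 (p : ℝ) (b : Bool) : ℝ≥0∞ := ENNReal.ofReal (if b then p else 1 - p)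

lemma cyl_measure (hμ : IsBernoulli p μ) (F : Finset V) (b : V → Bool) :
    μ {ω | ∀ v ∈ F, ω v = b v} = ∏ v ∈ F, w0 p (b v) := hμ F b

lemma single_measure (hμ : IsBernoulli p μ) (v : V) (c : Bool) :
    μ {ω | ω v = c} = w0 p c := by
  have := hμ {v} (fun _ => c)
  simpa [w0] using this

lemma w0_sum (hp0 : 0 ≤ p) (hp1 : p ≤ 1) : w0 p true + w0 p false = 1 := by
  have : w0 p true = ENNReal.ofReal p := by simp [w0]
  have h2 : w0 p false = ENNReal.ofReal (1 - p) := by simp [w0]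
  rw [this, h2, ← ENNReal.ofReal_add hp0 (by linarith), show p + (1 - p) = 1 by ring,
    ENNReal.ofReal_one]

lemma compl_single (v : V) (c : Bool) :
    ({ω : V → Bool | ω v = c})ᶜ = {ω : V → Bool | ω v = !c} := by
  ext ω
  simp only [Set.mem_compl_iff, Set.mem_setOf_eq]
  cases c <;> cases h : ω v <;> simp

lemma nm_single (hμ : IsBernoulli p μ) (hp0 : 0 ≤ p) (hp1 : p ≤ 1) (v : V) (c : Bool) :
    NullMeasurableSet {ω : V → Bool | ω v = c} μ := by
  refine nullMeasurableSet_of_add_compl (by simp) ?_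
  rw [compl_single, single_measure hμ, single_measure hμ, measure_univ]
  cases c
  · rw [add_comm]; exact w0_sum hp0 hp1
  · exact w0_sum hp0 hp1

lemma split_single (hμ : IsBernoulli p μ) (hp0 : 0 ≤ p) (hp1 : p ≤ 1)
    (s : Set (V → Bool)) (v : V) :
    μ s = μ (s ∩ {ω | ω v = true}) + μ (s ∩ {ω | ω v = false}) := by
  have h := measure_inter_add_diff₀ (μ := μ) s (nm_single hμ hp0 hp1 v true)
  rw [← h]
  congr 1
  rw [Set.diff_eq, compl_single]
  rfl

open Classical in
lemma det_update {X : Set (V → Bool)} {F : Finset V} {v : V}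
    (hX : Det (↑(insert v F) : Set V) X) (c : Bool) :
    Det (↑F : Set V) ((fun ω => Function.update ω v c) ⁻¹' X) := by
  intro ω ω' ha hm
  refine hX (fun x hx => ?_) hm
  by_cases hxv : x = v
  · subst hxv; simp
  · show Function.update ω v c x = Function.update ω' v c x
    rw [Function.update_of_ne hxv, Function.update_of_ne hxv]
    rcases Finset.mem_insert.1 (by exact_mod_cast hx) with h | hxF
    · exact absurd h hxv
    · exact ha x (by exact_mod_cast hxF)

open Classical in
lemma inter_single_update {X : Set (V → Bool)} {U : Set V} (hX : Det U X) (v : V)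
    (c : Bool) :
    X ∩ {ω | ω v = c} = ((fun ω => Function.update ω v c) ⁻¹' X) ∩ {ω | ω v = c} := by
  ext ω
  simp only [Set.mem_inter_iff, Set.mem_setOf_eq, Set.mem_preimage]
  constructor
  · rintro ⟨hx, hc⟩
    refine ⟨?_, hc⟩
    have : Function.update ω v c = ω := by rw [← hc]; exact Function.update_eq_self v ω
    rwa [this]
  · rintro ⟨hx, hc⟩
    have : Function.update ω v c = ω := by rw [← hc]; exact Function.update_eq_self v ω
    rw [this] at hx
    exact ⟨hx, hc⟩

end Bernoulli
section Independence

variable {V : Type*} [MeasurableSpace (V → Bool)] {μ : Measure (V → Bool)}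
  [IsProbabilityMeasure μ] {p : ℝ}

open Classical in
private lemma cyl_insert {v : V} {Gs : Finset V} (hvGs : v ∉ Gs) (b : V → Bool) (c : Bool) :
    ∀ ω : V → Bool, (∀ x ∈ insert v Gs, ω x = Function.update b v c x) ↔
      ((∀ x ∈ Gs, ω x = b x) ∧ ω v = c) := by
  intro ω
  constructor
  · intro h
    refine ⟨fun x hx => ?_, ?_⟩
    · have hxv : x ≠ v := fun hh => hvGs (by rw [← hh]; exact hx)
      have := h x (Finset.mem_insert_of_mem hx)
      rwa [Function.update_of_ne hxv] at this
    · simpa using h v (Finset.mem_insert_self v Gs)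
  · rintro ⟨h1, h2⟩ x hx
    rcases Finset.mem_insert.1 hx with rfl | hx'
    · simpa using h2
    · rw [Function.update_of_ne (fun hh => hvGs (by rw [← hh]; exact hx'))]
      exact h1 x hx'

open Classical in
private lemma prod_w0_insert {v : V} {Gs : Finset V} (hvGs : v ∉ Gs) (b : V → Bool)
    (c : Bool) :
    (∏ x ∈ insert v Gs, w0 p (Function.update b v c x)) =
      w0 p c * ∏ x ∈ Gs, w0 p (b x) := by
  rw [Finset.prod_insert hvGs, Function.update_self]
  congr 1
  refine Finset.prod_congr rfl fun x hx => ?_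
  rw [Function.update_of_ne (fun hh => hvGs (by rw [← hh]; exact hx))]

open Classical in
/-- Key cylinder-independence lemma: an event determined by a finite coordinate set is
independent of any disjoint cylinder. -/
lemma det_inter_cyl (hμ : IsBernoulli p μ) (hp0 : 0 ≤ p) (hp1 : p ≤ 1) :
    ∀ (F : Finset V) (X : Set (V → Bool)), Det (↑F : Set V) X →
      ∀ (Gs : Finset V), Disjoint F Gs → ∀ b : V → Bool,
        μ (X ∩ {ω | ∀ v ∈ Gs, ω v = b v}) = μ X * ∏ v ∈ Gs, w0 p (b v) := by
  intro F
  induction F using Finset.induction_on with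
  | empty =>
    intro X hX Gs _ b
    rcases Det.empty_cases (by exact_mod_cast hX) with rfl | rfl
    · simp
    · simp [cyl_measure hμ]
  | @insert v F' hv IH =>
    intro X hX Gs hdisj b
    have hvGs : v ∉ Gs := fun h =>
      (Finset.disjoint_left.1 hdisj (Finset.mem_insert_self v F') h)
    have hdisj' : Disjoint F' Gs :=
      Finset.disjoint_of_subset_left (Finset.subset_insert v F') hdisj
    set Xc : Bool → Set (V → Bool) := fun c => (fun ω => Function.update ω v c) ⁻¹' X
      with hXc
    have hdet : ∀ c, Det (↑F' : Set V) (Xc c) := fun c => det_update hX c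
    have hkey : ∀ c : Bool, X ∩ {ω | ∀ x ∈ Gs, ω x = b x} ∩ {ω | ω v = c} =
        Xc c ∩ {ω | ∀ x ∈ insert v Gs, ω x = Function.update b v c x} := by
      intro c
      ext ω
      simp only [Set.mem_inter_iff, Set.mem_setOf_eq, Set.mem_preimage,
        cyl_insert hvGs b c ω]
      constructor
      · rintro ⟨⟨hx, hcyl⟩, hc⟩
        have hself : Function.update ω v c = ω := by
          rw [← hc]; exact Function.update_eq_self v ω
        refine ⟨?_, hcyl, hc⟩
        show Function.update ω v c ∈ X
        rw [hself]; exact hx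
      · rintro ⟨hx, hcyl, hc⟩
        have hself : Function.update ω v c = ω := by
          rw [← hc]; exact Function.update_eq_self v ω
        have hx' : Function.update ω v c ∈ X := hx
        rw [hself] at hx'
        exact ⟨⟨hx', hcyl⟩, hc⟩
    have hXsplit : ∀ c : Bool, μ (X ∩ {ω | ω v = c}) = μ (Xc c) * w0 p c := by
      intro c
      rw [inter_single_update (U := (↑(insert v F') : Set V)) hX v c]
      have hcylv : {ω : V → Bool | ω v = c} = {ω : V → Bool | ∀ x ∈ ({v} : Finset V), ω x = (fun _ => c) x} := by
        ext ω; simp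
      rw [hcylv, IH (Xc c) (hdet c) {v} (Finset.disjoint_singleton_right.2 hv) (fun _ => c)]
      simp
    have hdisjI : ∀ c : Bool, Disjoint F' (insert v Gs) :=
      fun _ => Finset.disjoint_insert_right.2 ⟨hv, hdisj'⟩
    calc μ (X ∩ {ω | ∀ x ∈ Gs, ω x = b x})
        = μ (X ∩ {ω | ∀ x ∈ Gs, ω x = b x} ∩ {ω | ω v = true}) +
          μ (X ∩ {ω | ∀ x ∈ Gs, ω x = b x} ∩ {ω | ω v = false}) :=
          split_single hμ hp0 hp1 _ v
      _ = μ (Xc true) * (w0 p true * ∏ x ∈ Gs, w0 p (b x)) +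
          μ (Xc false) * (w0 p false * ∏ x ∈ Gs, w0 p (b x)) := by
          rw [hkey true, hkey false,
            IH (Xc true) (hdet true) (insert v Gs) (hdisjI true) (Function.update b v true),
            IH (Xc false) (hdet false) (insert v Gs) (hdisjI false) (Function.update b v false),
            prod_w0_insert hvGs b true, prod_w0_insert hvGs b false]
      _ = (μ (Xc true) * w0 p true + μ (Xc false) * w0 p false) * ∏ x ∈ Gs, w0 p (b x) := by
          ring
      _ = μ X * ∏ x ∈ Gs, w0 p (b x) := by
          rw [← hXsplit true, ← hXsplit false, ← split_single hμ hp0 hp1 X v]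

/-- Two events determined by disjoint finite coordinate sets are independent. -/
lemma det_indep (hμ : IsBernoulli p μ) (hp0 : 0 ≤ p) (hp1 : p ≤ 1) :
    ∀ (F₂ : Finset V) (Y : Set (V → Bool)), Det (↑F₂ : Set V) Y →
      ∀ (F₁ : Finset V) (X : Set (V → Bool)), Det (↑F₁ : Set V) X →
        Disjoint F₁ F₂ → μ (X ∩ Y) = μ X * μ Y := by
  classical
  intro F₂
  induction F₂ using Finset.induction_on with
  | empty =>
    intro Y hY F₁ X hX _
    rcases Det.empty_cases (by exact_mod_cast hY) with rfl | rfl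
    · simp
    · simp
  | @insert v G hv IH =>
    intro Y hY F₁ X hX hdisj
    have hvF₁ : v ∉ F₁ := fun h =>
      (Finset.disjoint_right.1 hdisj (Finset.mem_insert_self v G) h)
    have hdisj' : Disjoint F₁ G :=
      Finset.disjoint_of_subset_right (Finset.subset_insert v G) hdisj
    set Yc : Bool → Set (V → Bool) := fun c => (fun ω => Function.update ω v c) ⁻¹' Y
    have hdetY : ∀ c, Det (↑G : Set V) (Yc c) := fun c => det_update hY c
    have key : ∀ c : Bool, μ (X ∩ Y ∩ {ω | ω v = c}) = μ X * w0 p c * μ (Yc c) := by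
      intro c
      have h1 : X ∩ Y ∩ {ω | ω v = c} = (X ∩ {ω | ω v = c}) ∩ Yc c := by
        rw [Set.inter_assoc, inter_single_update hY v c]
        ext ω; simp only [Set.mem_inter_iff, Set.mem_setOf_eq, Set.mem_preimage]; tauto
      rw [h1]
      have hdetX' : Det (↑(insert v F₁) : Set V) (X ∩ {ω | ω v = c}) := by
        refine Det.inter (hX.mono ?_) ?_
        · exact_mod_cast Finset.coe_subset.2 (Finset.subset_insert v F₁)
        · intro ω ω' ha hm
          have hvv := ha v (by exact_mod_cast Finset.mem_insert_self v F₁)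
          simp only [Set.mem_setOf_eq] at hm ⊢
          rw [← hvv]; exact hm
      have hd : Disjoint (insert v F₁) G := Finset.disjoint_insert_left.2 ⟨hv, hdisj'⟩
      rw [IH (Yc c) (hdetY c) (insert v F₁) (X ∩ {ω | ω v = c}) hdetX' hd]
      have hXc : μ (X ∩ {ω | ω v = c}) = μ X * w0 p c := by
        have hcylv : {ω : V → Bool | ω v = c} =
            {ω : V → Bool | ∀ x ∈ ({v} : Finset V), ω x = (fun _ => c) x} := by
          ext ω; simp
        rw [hcylv, det_inter_cyl hμ hp0 hp1 F₁ X hX {v}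
          (Finset.disjoint_singleton_right.2 hvF₁) (fun _ => c)]
        simp
      rw [hXc]
    have hYsplit : ∀ c : Bool, μ (Y ∩ {ω | ω v = c}) = μ (Yc c) * w0 p c := by
      intro c
      rw [inter_single_update hY v c]
      have hcylv : {ω : V → Bool | ω v = c} =
          {ω : V → Bool | ∀ x ∈ ({v} : Finset V), ω x = (fun _ => c) x} := by
        ext ω; simp
      rw [hcylv, det_inter_cyl hμ hp0 hp1 G (Yc c) (hdetY c) {v}
        (Finset.disjoint_singleton_right.2 hv) (fun _ => c)]
      simp
    calc μ (X ∩ Y) = μ (X ∩ Y ∩ {ω | ω v = true}) + μ (X ∩ Y ∩ {ω | ω v = false}) :=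
          split_single hμ hp0 hp1 _ v
      _ = μ X * w0 p true * μ (Yc true) + μ X * w0 p false * μ (Yc false) := by
          rw [key true, key false]
      _ = μ X * (μ (Yc true) * w0 p true + μ (Yc false) * w0 p false) := by ring
      _ = μ X * μ Y := by
          rw [← hYsplit true, ← hYsplit false, ← split_single hμ hp0 hp1 Y v]

/-- A finitely-determined event is null measurable. -/
lemma det_nullMeasurable (hμ : IsBernoulli p μ) (hp0 : 0 ≤ p) (hp1 : p ≤ 1) :
    ∀ (F : Finset V) (X : Set (V → Bool)), Det (↑F : Set V) X →
      NullMeasurableSet X μ := by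
  classical
  intro F
  induction F using Finset.induction_on with
  | empty =>
    intro X hX
    rcases Det.empty_cases (by exact_mod_cast hX) with rfl | rfl
    · exact MeasurableSet.empty.nullMeasurableSet
    · exact MeasurableSet.univ.nullMeasurableSet
  | @insert v F' hv IH =>
    intro X hX
    set Xc : Bool → Set (V → Bool) := fun c => (fun ω => Function.update ω v c) ⁻¹' X
    have hdecomp : X = (Xc true ∩ {ω | ω v = true}) ∪ (Xc false ∩ {ω | ω v = false}) := by
      have h1 := inter_single_update hX v true
      have h2 := inter_single_update hX v false
      have : X = (X ∩ {ω | ω v = true}) ∪ (X ∩ {ω | ω v = false}) := by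
        ext ω
        simp only [Set.mem_union, Set.mem_inter_iff, Set.mem_setOf_eq]
        cases h : ω v <;> tauto
      rw [this, h1, h2]
    rw [hdecomp]
    exact ((IH _ (det_update hX true)).inter (nm_single hμ hp0 hp1 v true)).union
      ((IH _ (det_update hX false)).inter (nm_single hμ hp0 hp1 v false))

end Independence
section Exhaustion

variable {V : Type*} [MeasurableSpace (V → Bool)] {μ : Measure (V → Bool)}
  [IsProbabilityMeasure μ] {p : ℝ}

/-- Independence of a countably-exhausted event from a disjoint finitely-determined event. -/
lemma exhaust_indep (hμ : IsBernoulli p μ) (hp0 : 0 ≤ p) (hp1 : p ≤ 1)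
    (Y : ℕ → Set (V → Bool)) (hmono : Monotone Y)
    (T : ℕ → Finset V) (hTmono : Monotone T)
    (hdet : ∀ n, Det (↑(T n) : Set V) (Y n))
    (C : Set (V → Bool)) (Fc : Finset V) (hC : Det (↑Fc : Set V) C)
    (hdisj : ∀ n, Disjoint (T n) Fc) :
    μ ((⋃ n, Y n) ∩ C) = μ (⋃ n, Y n) * μ C := by
  classical
  set Z : ℕ → Set (V → Bool) := fun n => Nat.rec (Y 0) (fun m _ => Y (m + 1) \ Y m) n
    with hZ
  have hZ0 : Z 0 = Y 0 := rfl
  have hZs : ∀ n, Z (n + 1) = Y (n + 1) \ Y n := fun n => rfl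
  have hZsub : ∀ n, Z n ⊆ Y n := by
    intro n; cases n
    · exact subset_rfl
    · exact Set.diff_subset
  have hZdet : ∀ n, Det (↑(T n) : Set V) (Z n) := by
    intro n; cases n with
    | zero => exact hdet 0
    | succ m => exact (hdet (m + 1)).diff ((hdet m).mono
        (by exact_mod_cast Finset.coe_subset.2 (hTmono (Nat.le_succ m))))
  have hYZ : ∀ n, Y n ⊆ ⋃ m, Z m := by
    intro n
    induction n with
    | zero => exact (hZ0 ▸ Set.subset_iUnion Z 0)
    | succ m ih =>
      intro ω hω
      by_cases hm : ω ∈ Y m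
      · exact ih hm
      · exact Set.mem_iUnion.2 ⟨m + 1, by rw [hZs]; exact ⟨hω, hm⟩⟩
  have hunion : (⋃ n, Z n) = ⋃ n, Y n := by
    apply Set.Subset.antisymm
    · exact Set.iUnion_subset fun n => (hZsub n).trans (Set.subset_iUnion Y n)
    · exact Set.iUnion_subset hYZ
  have hpair : Pairwise (Function.onFun Disjoint Z) := by
    have : ∀ m n, m < n → Disjoint (Z m) (Z n) := by
      intro m n hmn
      obtain ⟨n', rfl⟩ := Nat.exists_eq_add_of_lt hmn
      rw [show m + n' + 1 = (m + n') + 1 by ring, hZs]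
      refine Set.disjoint_left.2 fun ω hω hω' => ?_
      exact hω'.2 (hmono (Nat.le_add_right m n') (hZsub m hω))
    intro m n hne
    rcases lt_or_gt_of_ne hne with h | h
    · exact this m n h
    · exact (this n m h).symm
  have hZnm : ∀ n, NullMeasurableSet (Z n) μ :=
    fun n => det_nullMeasurable hμ hp0 hp1 (T n) (Z n) (hZdet n)
  have hCnm : NullMeasurableSet C μ := det_nullMeasurable hμ hp0 hp1 Fc C hC
  have h1 : μ ((⋃ n, Y n) ∩ C) = ∑' n, μ (Z n ∩ C) := by
    rw [← hunion, Set.iUnion_inter]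
    refine measure_iUnion₀ ?_ fun n => (hZnm n).inter hCnm
    intro m n hne
    have : Disjoint (Z m ∩ C) (Z n ∩ C) :=
      Set.disjoint_of_subset Set.inter_subset_left Set.inter_subset_left (hpair hne)
    exact this.aedisjoint
  have h2 : ∀ n, μ (Z n ∩ C) = μ (Z n) * μ C := fun n =>
    det_indep hμ hp0 hp1 Fc C hC (T n) (Z n) (hZdet n) (hdisj n)
  have h3 : μ (⋃ n, Y n) = ∑' n, μ (Z n) := by
    rw [← hunion]
    exact measure_iUnion₀ (fun m n hne => (hpair hne).aedisjoint) hZnm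
  rw [h1, h3]
  simp only [h2]
  rw [ENNReal.tsum_mul_right]

end Exhaustion
section GraphLemmas

variable {V : Type*}

lemma openGraph_le (G : SimpleGraph V) (ω : V → Bool) : openGraph G ω ≤ G :=
  fun _ _ h => h.1

lemma restrictGraph_le (G : SimpleGraph V) (A : Set V) : restrictGraph G A ≤ G :=
  fun _ _ h => h.1

lemma openGraph_agree {K : SimpleGraph V} {U : Set V}
    (hK : ∀ ⦃u v⦄, K.Adj u v → u ∈ U ∧ v ∈ U) {ω ω' : V → Bool}
    (hagree : ∀ x ∈ U, ω x = ω' x) : openGraph K ω ≤ openGraph K ω' :=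
  fun u v h => ⟨h.1, by rw [← hagree u (hK h.1).1]; exact h.2.1,
    by rw [← hagree v (hK h.1).2]; exact h.2.2⟩

lemma self_mem_ball (G : SimpleGraph V) (v : V) (D : ℕ) : v ∈ ball G v D :=
  ⟨SimpleGraph.Reachable.refl v, by simp [SimpleGraph.dist_self]⟩

lemma ball_mono (G : SimpleGraph V) (v : V) {D D' : ℕ} (h : D ≤ D') :
    ball G v D ⊆ ball G v D' := fun u hu => ⟨hu.1, hu.2.trans h⟩

lemma ball_finite {G : SimpleGraph V} (hlf : G.LocallyFinite) (v : V) (D : ℕ) :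
    (ball G v D).Finite := by
  induction D with
  | zero =>
    refine Set.Finite.subset (Set.finite_singleton v) ?_
    rintro u ⟨hr, hd⟩
    have h0 : G.dist v u = 0 := Nat.le_zero.1 hd
    rcases SimpleGraph.dist_eq_zero_iff_eq_or_not_reachable.1 h0 with rfl | hnr
    · exact rfl
    · exact absurd hr hnr
  | succ D ih =>
    have hsub : ball G v (D + 1) ⊆ ball G v D ∪ ⋃ y ∈ ball G v D, G.neighborSet y := by
      rintro u ⟨hr, hd⟩
      by_cases hD : G.dist v u ≤ D
      · exact Or.inl ⟨hr, hD⟩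
      · have hne : u ≠ v := by
          rintro rfl
          exact hD (by simp [SimpleGraph.dist_self])
        obtain ⟨p, hp⟩ := hr.exists_walk_length_eq_dist
        obtain ⟨y, hadj, q, hq⟩ := SimpleGraph.Walk.exists_eq_cons_of_ne hne p.reverse
        have hlen : q.length = D := by
          have h1 : p.reverse.length = G.dist v u := by
            rw [SimpleGraph.Walk.length_reverse]; exact hp
          have h2 : G.dist v u = D + 1 := le_antisymm hd (Nat.lt_of_not_le hD)
          have := congrArg SimpleGraph.Walk.length hq
          rw [h1, h2] at this
          simpa using this.symm
        have hyD : y ∈ ball G v D := by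
          refine ⟨⟨q.reverse⟩, ?_⟩
          rw [SimpleGraph.dist_comm]
          exact hlen ▸ SimpleGraph.dist_le q
        exact Or.inr (Set.mem_biUnion hyD hadj.symm)
    exact Set.Finite.subset
      (ih.union (ih.biUnion fun y _ => (G.neighborSet y).toFinite)) hsub

lemma firstExit {H : SimpleGraph V} {Q : Set V} :
    ∀ {a b : V} (_p : H.Walk a b), a ∈ Q → b ∉ Q →
      ∃ y z, y ∈ Q ∧ z ∉ Q ∧ H.Adj y z ∧ (restrictGraph H Q).Reachable a y
  | a, _, SimpleGraph.Walk.nil, ha, hb => absurd ha hb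
  | a, b, SimpleGraph.Walk.cons (v := c) h q, ha, hb => by
    by_cases hc : c ∈ Q
    · obtain ⟨y, z, hy, hz, hadj, hreach⟩ := firstExit q hc hb
      have hadj' : (restrictGraph H Q).Adj a c := ⟨h, ha, hc⟩
      exact ⟨y, z, hy, hz, hadj, hadj'.reachable.trans hreach⟩
    · exact ⟨a, c, ha, hc, h, SimpleGraph.Reachable.refl a⟩

end GraphLemmas
section Events

variable {V : Type*} (G : SimpleGraph V) {k : ℕ} (w : Fin k → V) (D : Fin k → ℕ)

/-- The set of vertices removed to form the punctured graph `G_i`. -/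
def remSet (i : ℕ) : Set V := ⋃ j ∈ {j : Fin k | (j : ℕ) < i}, ball G (w j) (D j)

/-- The event `A_j` : `w_j` is disconnected from the inner boundary of its ball within the
punctured graph. -/
def evA (j : Fin k) : Set (V → Bool) :=
  {ω | ¬ ConnWithin (punctured G w D (j : ℕ)) (ball G (w j) (D j)) ω (w j)
    (innerBoundary G (w j) (D j))}

/-- The event `E_j` : `w_j` is disconnected from infinity in the punctured graph. -/
def evE (j : Fin k) : Set (V → Bool) :=
  {ω | ¬ ConnInfty (punctured G w D (j : ℕ)) ω (w j)}

/-- The open cluster of `w_j` in the punctured graph. -/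
def rset (j : Fin k) (ω : V → Bool) : Set V :=
  {u | (openGraph (punctured G w D (j : ℕ)) ω).Reachable (w j) u}

/-- Finitary approximations to `E_j`. -/
def evY (j : Fin k) (n : ℕ) : Set (V → Bool) :=
  {ω | ¬ ω (w j) = true} ∪ {ω | rset G w D j ω ⊆ ball G (w j) n}

/-- The coordinate support of `evY j n`. -/
def tset (j : Fin k) (n : ℕ) : Set V := ball G (w j) (n + 1) \ remSet G w D (j : ℕ)

/-- The chain event `C_i = ⋂_{j<i} A_j`. -/
def evC (i : ℕ) : Set (V → Bool) := ⋂ (j : Fin k), ⋂ (_ : (j : ℕ) < i), evA G w D j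

lemma ball_subset_remSet {j : Fin k} {i : ℕ} (hj : (j : ℕ) < i) :
    ball G (w j) (D j) ⊆ remSet G w D i := by
  intro u hu
  exact Set.mem_biUnion (by exact hj) hu

lemma punct_adj {i : ℕ} {u v : V} (h : (punctured G w D i).Adj u v) :
    G.Adj u v ∧ u ∉ remSet G w D i ∧ v ∉ remSet G w D i := h

lemma det_evA_ball (j : Fin k) : Det (ball G (w j) (D j)) (evA G w D j) := by
  refine Det.compl (X := {ω | ConnWithin (punctured G w D (j : ℕ)) (ball G (w j) (D j)) ω
    (w j) (innerBoundary G (w j) (D j))}) ?_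
  rintro ω ω' hagree ⟨u, hu, hr⟩
  refine ⟨u, hu, hr.mono (openGraph_agree
    (K := restrictGraph (punctured G w D (j : ℕ)) (ball G (w j) (D j))) ?_ hagree)⟩
  exact fun a b h => ⟨h.2.1, h.2.2⟩

lemma det_evA_rem (j : Fin k) : Det ((remSet G w D (j : ℕ))ᶜ) (evA G w D j) := by
  refine Det.compl (X := {ω | ConnWithin (punctured G w D (j : ℕ)) (ball G (w j) (D j)) ω
    (w j) (innerBoundary G (w j) (D j))}) ?_
  rintro ω ω' hagree ⟨u, hu, hr⟩
  refine ⟨u, hu, hr.mono (openGraph_agree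
    (K := restrictGraph (punctured G w D (j : ℕ)) (ball G (w j) (D j))) ?_ hagree)⟩
  exact fun a b h => ⟨h.1.2.1, h.1.2.2⟩

lemma det_evA (j : Fin k) : Det (ball G (w j) (D j) \ remSet G w D (j : ℕ)) (evA G w D j) := by
  rw [Set.diff_eq]
  exact (det_evA_ball G w D j).coordInter (det_evA_rem G w D j)

lemma det_evE (j : Fin k) (hw : w j ∉ remSet G w D (j : ℕ)) :
    Det ((remSet G w D (j : ℕ))ᶜ) (evE G w D j) := by
  refine Det.compl (X := {ω | ConnInfty (punctured G w D (j : ℕ)) ω (w j)}) ?_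
  rintro ω ω' hagree ⟨hw1, hinf⟩
  refine ⟨by rw [← hagree (w j) hw]; exact hw1, hinf.mono ?_⟩
  intro u hu
  refine hu.mono (openGraph_agree (K := punctured G w D (j : ℕ)) ?_ hagree)
  exact fun a b h => ⟨h.2.1, h.2.2⟩

lemma rset_reachable {j : Fin k} {ω : V → Bool} {u : V} (hu : u ∈ rset G w D j ω) :
    G.Reachable (w j) u := by
  refine hu.mono ?_
  intro a b h
  exact h.1.1

lemma evE_eq_iUnion (hlf : G.LocallyFinite) (j : Fin k) :
    evE G w D j = ⋃ n, evY G w D j n := by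
  ext ω
  constructor
  · intro hω
    by_cases hw1 : ω (w j) = true
    · have hfin : (rset G w D j ω).Finite := by
        by_contra hinf
        exact hω ⟨hw1, hinf⟩
      refine Set.mem_iUnion.2 ⟨hfin.toFinset.sup (fun u => G.dist (w j) u), Or.inr ?_⟩
      intro u hu
      exact ⟨rset_reachable G w D hu, Finset.le_sup (hfin.mem_toFinset.2 hu)⟩
    · exact Set.mem_iUnion.2 ⟨0, Or.inl hw1⟩
  · intro hω
    obtain ⟨n, hn⟩ := Set.mem_iUnion.1 hω
    rcases hn with h1 | h2
    · exact fun hCI => h1 hCI.1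
    · intro hCI
      exact hCI.2 ((ball_finite hlf (w j) n).subset h2)

end Events
section Events2

variable {V : Type*} {G : SimpleGraph V} {k : ℕ} {w : Fin k → V} {D : Fin k → ℕ}

lemma evY_mono (G : SimpleGraph V) (w : Fin k → V) (D : Fin k → ℕ) (j : Fin k) :
    Monotone (evY G w D j) := by
  intro m n hmn
  exact Set.union_subset_union_right _ (fun ω hω => hω.trans (ball_mono G (w j) hmn))

lemma tset_mono (G : SimpleGraph V) (w : Fin k → V) (D : Fin k → ℕ) (j : Fin k) :
    Monotone (tset G w D j) := by
  intro m n hmn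
  exact Set.diff_subset_diff_left (ball_mono G (w j) (by omega))

lemma det_evY (hconn : G.Connected) (j : Fin k)
    (hw : w j ∉ remSet G w D (j : ℕ)) (n : ℕ) :
    Det (tset G w D j n) (evY G w D j n) := by
  have hwT : w j ∈ tset G w D j n := ⟨self_mem_ball G (w j) (n + 1), hw⟩
  refine Det.union ?_ ?_
  · intro ω ω' hagree hm
    show ¬ ω' (w j) = true
    rw [← hagree (w j) hwT]
    exact hm
  · intro ω ω' hagree hsub
    intro u hu
    by_contra hun
    obtain ⟨p⟩ := hu
    obtain ⟨y, z, hy, hz, hadj, hreach⟩ := firstExit p (self_mem_ball G (w j) n) hun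
    -- transfer the inner walk to configuration ω
    have htrans : restrictGraph (openGraph (punctured G w D (j : ℕ)) ω') (ball G (w j) n) ≤
        openGraph (punctured G w D (j : ℕ)) ω := by
      rintro a b ⟨⟨hpadj, hoa, hob⟩, haQ, hbQ⟩
      have haT : a ∈ tset G w D j n := ⟨ball_mono G (w j) (Nat.le_succ n) haQ, hpadj.2.1⟩
      have hbT : b ∈ tset G w D j n := ⟨ball_mono G (w j) (Nat.le_succ n) hbQ, hpadj.2.2⟩
      exact ⟨hpadj, by rw [hagree a haT]; exact hoa, by rw [hagree b hbT]; exact hob⟩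
    have hyR : y ∈ rset G w D j ω := hreach.mono htrans
    obtain ⟨hpyz, hoy, hoz⟩ := hadj
    have hzball : z ∈ ball G (w j) (n + 1) := by
      have hzr : G.Reachable (w j) z := hy.1.trans hpyz.1.reachable
      refine ⟨hzr, ?_⟩
      have h1 : G.dist (w j) z ≤ G.dist (w j) y + G.dist y z := hconn.dist_triangle
      have h2 : G.dist y z ≤ 1 := by
        have := SimpleGraph.dist_le (SimpleGraph.Walk.cons hpyz.1 SimpleGraph.Walk.nil)
        simpa using this
      have h3 := hy.2
      omega
    have hzT : z ∈ tset G w D j n := ⟨hzball, hpyz.2.2⟩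
    have hyT : y ∈ tset G w D j n := ⟨ball_mono G (w j) (Nat.le_succ n) hy, hpyz.2.1⟩
    have hedge : (openGraph (punctured G w D (j : ℕ)) ω).Adj y z :=
      ⟨hpyz, by rw [hagree y hyT]; exact hoy, by rw [hagree z hzT]; exact hoz⟩
    have hzR : z ∈ rset G w D j ω := hyR.trans hedge.reachable
    exact hz (hsub hzR)

lemma evA_subset_evE (hlf : G.LocallyFinite) (j : Fin k) :
    evA G w D j ⊆ evE G w D j := by
  intro ω hω hCI
  refine hω ?_
  obtain ⟨hw1, hinf⟩ := hCI
  have hnot : ¬ (rset G w D j ω ⊆ ball G (w j) (D j)) :=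
    fun hsub => hinf ((ball_finite hlf (w j) (D j)).subset hsub)
  obtain ⟨u, hu, hun⟩ := Set.not_subset.1 hnot
  obtain ⟨p⟩ := hu
  obtain ⟨y, z, hy, hz, hadj, hreach⟩ := firstExit p (self_mem_ball G (w j) (D j)) hun
  refine ⟨y, ⟨hy, z, hadj.1.1, hz⟩, hreach.mono ?_⟩
  rintro a b ⟨⟨hpadj, hoa, hob⟩, haQ, hbQ⟩
  exact ⟨⟨hpadj, haQ, hbQ⟩, hoa, hob⟩

lemma det_evC (i : ℕ) : Det (remSet G w D i) (evC G w D i) := by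
  refine Det.iInter2 (fun j hj => ?_)
  exact (det_evA_ball G w D j).mono (ball_subset_remSet G w D hj)

lemma evC_zero : evC G w D 0 = Set.univ := by
  ext ω
  simp [evC]

lemma evC_succ (i : ℕ) (hik : i < k) :
    evC G w D (i + 1) = evA G w D ⟨i, hik⟩ ∩ evC G w D i := by
  ext ω
  simp only [evC, Set.mem_iInter, Set.mem_inter_iff]
  constructor
  · intro h
    exact ⟨h ⟨i, hik⟩ (by simp), fun j hj => h j (by omega)⟩
  · rintro ⟨h1, h2⟩ j hj
    rcases Nat.lt_or_ge (j : ℕ) i with h | h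
    · exact h2 j h
    · have : (j : ℕ) = i := by omega
      have hj' : j = ⟨i, hik⟩ := Fin.ext this
      rw [hj']
      exact h1

lemma evE_compl (j : Fin k) :
    (evE G w D j)ᶜ = {ω | ConnInfty (punctured G w D (j : ℕ)) ω (w j)} := by
  ext ω
  simp [evE]

end Events2
/-- **Quantitative supercritical disconnection bound** (Theorem 1.1 / Lemma 2.4, with
packing number at least `k`): with `c = 1 - ((1-p)/(1-p₁))^{1-ε'}` for some
`p₁ ∈ (p_c, p)`, `ε' ∈ (0,1)`, and `δ ∈ (0,1)`, if `S` admits a `(p,δ,c)`-packing of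
size `k` then `P_p(S ↮ ∞) ≤ δ(1-c)/c + (1+δ)(1-c)^k`. -/
theorem supercritical_disconnection {V : Type*} [MeasurableSpace (V → Bool)]
    (G : SimpleGraph V) [Infinite V] (hconn : G.Connected) (hlf : G.LocallyFinite)
    (p : ℝ) (hp : p ∈ Set.Ioo (0:ℝ) 1) (hpc : pcSite G (V := V) < p)
    (μ : Measure (V → Bool)) [IsProbabilityMeasure μ] (hμ : IsBernoulli p μ)
    (S : Set V) (p₁ ε' δ c : ℝ)
    (hp₁ : p₁ ∈ Set.Ioo (pcSite G (V := V)) p) (hε' : ε' ∈ Set.Ioo (0:ℝ) 1)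
    (hδ : δ ∈ Set.Ioo (0:ℝ) 1)
    (hc : c = 1 - ((1 - p) / (1 - p₁)) ^ (1 - ε'))
    (k : ℕ) (hpk : ∃ (w : Fin k → V) (D : Fin k → ℕ), IsPacking G μ δ c S k w D) :
    μ {ω | ∀ v ∈ S, ¬ ConnInfty G ω v} ≤
      ENNReal.ofReal (δ * (1 - c) / c + (1 + δ) * (1 - c) ^ k) := by
  classical
  obtain ⟨w, D, hmem, hsep, hprob⟩ := hpk
  have hp0 : (0:ℝ) ≤ p := le_of_lt hp.1
  have hp1 : p ≤ 1 := le_of_lt hp.2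
  -- bounds on c
  have hr0 : 0 < (1 - p) / (1 - p₁) :=
    div_pos (by linarith [hp.2]) (by linarith [hp₁.2, hp.2])
  have hr1 : (1 - p) / (1 - p₁) < 1 :=
    (div_lt_one (by linarith [hp₁.2, hp.2])).2 (by linarith [hp₁.2])
  have ht0 : 0 < ((1 - p) / (1 - p₁)) ^ (1 - ε') := Real.rpow_pos_of_pos hr0 _
  have ht1 : ((1 - p) / (1 - p₁)) ^ (1 - ε') < 1 :=
    Real.rpow_lt_one (le_of_lt hr0) hr1 (by linarith [hε'.2])
  have hc0 : 0 < c := by rw [hc]; linarith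
  have hc1 : c < 1 := by rw [hc]; linarith
  have hδ0 : (0:ℝ) ≤ δ := le_of_lt hδ.1
  set x : ℝ≥0∞ := ENNReal.ofReal (1 - c) with hx
  set d : ℝ≥0∞ := ENNReal.ofReal δ with hd
  -- separation hypothesis in remSet form
  have hsep' : ∀ j : Fin k, w j ∉ remSet G w D (j : ℕ) := fun j => hsep j
  -- finiteness facts
  have hBfin : ∀ j : Fin k, (ball G (w j) (D j)).Finite := fun j => ball_finite hlf _ _
  have hPfin : ∀ i : ℕ, (remSet G w D i).Finite := fun i =>
    Set.Finite.biUnion (Set.toFinite _) (fun j _ => hBfin j)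
  have hSfin : ∀ j : Fin k, (ball G (w j) (D j) \ remSet G w D (j : ℕ)).Finite :=
    fun j => (hBfin j).subset Set.diff_subset
  have hTfin : ∀ (j : Fin k) (n : ℕ), (tset G w D j n).Finite :=
    fun j n => (ball_finite hlf (w j) (n + 1)).subset Set.diff_subset
  -- hprob in event notation
  have hprobA : ∀ j : Fin k, μ (evA G w D j) ≤ μ (evE G w D j) := fun j => (hprob j).1
  have hprobE : ∀ j : Fin k,
      μ (evE G w D j) ≤ ENNReal.ofReal (1 + δ) * μ (evA G w D j) := fun j => (hprob j).2.1
  have hprobc : ∀ j : Fin k, ENNReal.ofReal c ≤ μ (evE G w D j)ᶜ := by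
    intro j
    rw [evE_compl]
    exact (hprob j).2.2
  -- null measurability
  have hAnm : ∀ j : Fin k, NullMeasurableSet (evA G w D j) μ := by
    intro j
    refine det_nullMeasurable hμ hp0 hp1 (hBfin j).toFinset _ ?_
    rw [Set.Finite.coe_toFinset]
    exact det_evA_ball G w D j
  have hEnm : ∀ j : Fin k, NullMeasurableSet (evE G w D j) μ := by
    intro j
    rw [evE_eq_iUnion G w D hlf j]
    refine NullMeasurableSet.iUnion fun n => ?_
    refine det_nullMeasurable hμ hp0 hp1 (hTfin j n).toFinset _ ?_
    rw [Set.Finite.coe_toFinset]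
    exact det_evY hconn j (hsep' j) n
  -- independence identities
  have hdisjSP : ∀ j : Fin k, Disjoint (hSfin j).toFinset (hPfin (j : ℕ)).toFinset := by
    intro j
    rw [Finset.disjoint_left]
    intro a ha hb
    rw [Set.Finite.mem_toFinset] at ha hb
    exact ha.2 hb
  have hdisjTP : ∀ (j : Fin k) (n : ℕ),
      Disjoint (hTfin j n).toFinset (hPfin (j : ℕ)).toFinset := by
    intro j n
    rw [Finset.disjoint_left]
    intro a ha hb
    rw [Set.Finite.mem_toFinset] at ha hb
    exact ha.2 hb
  have hprodA : ∀ j : Fin k, μ (evA G w D j ∩ evC G w D (j : ℕ)) =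
      μ (evA G w D j) * μ (evC G w D (j : ℕ)) := by
    intro j
    refine det_indep hμ hp0 hp1 (hPfin (j : ℕ)).toFinset _ ?_ (hSfin j).toFinset _ ?_
      (hdisjSP j)
    · rw [Set.Finite.coe_toFinset]; exact det_evC _
    · rw [Set.Finite.coe_toFinset]; exact det_evA G w D j
  have hprodE2 : ∀ j : Fin k, μ (evE G w D j ∩ evC G w D (j : ℕ)) =
      μ (evE G w D j) * μ (evC G w D (j : ℕ)) := by
    intro j
    rw [evE_eq_iUnion G w D hlf j]
    refine exhaust_indep hμ hp0 hp1 (evY G w D j) (evY_mono G w D j)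
      (fun n => (hTfin j n).toFinset) ?_ ?_ _ (hPfin (j : ℕ)).toFinset ?_
      (fun n => hdisjTP j n)
    · intro m n hmn
      exact Set.Finite.toFinset_mono (tset_mono G w D j hmn)
    · intro n
      rw [Set.Finite.coe_toFinset]
      exact det_evY hconn j (hsep' j) n
    · rw [Set.Finite.coe_toFinset]
      exact det_evC _
  -- marginal bounds
  have hEle : ∀ j : Fin k, μ (evE G w D j) ≤ x := by
    intro j
    have hcomp := measure_add_measure_compl₀ (μ := μ) (hEnm j)
    rw [measure_univ] at hcomp
    have h1 : μ (evE G w D j) + ENNReal.ofReal c ≤ 1 := by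
      calc μ (evE G w D j) + ENNReal.ofReal c
          ≤ μ (evE G w D j) + μ (evE G w D j)ᶜ := add_le_add le_rfl (hprobc j)
        _ = 1 := hcomp
    have h2 : μ (evE G w D j) ≤ 1 - ENNReal.ofReal c :=
      ENNReal.le_sub_of_add_le_right ENNReal.ofReal_ne_top h1
    have h3 : (1 : ℝ≥0∞) - ENNReal.ofReal c = x := by
      rw [hx, ENNReal.ofReal_sub 1 (le_of_lt hc0), ENNReal.ofReal_one]
    rw [← h3]
    exact h2
  have hAle : ∀ j : Fin k, μ (evA G w D j) ≤ x := fun j => (hprobA j).trans (hEle j)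
  -- chain bound
  have hCle : ∀ i : ℕ, i ≤ k → μ (evC G w D i) ≤ x ^ i := by
    intro i
    induction i with
    | zero =>
      intro _
      rw [evC_zero (G := G) (w := w) (D := D), measure_univ, pow_zero]
    | succ i ih =>
      intro hik
      have hik' : i < k := Nat.lt_of_succ_le hik
      rw [evC_succ (G := G) (w := w) (D := D) i hik', hprodA ⟨i, hik'⟩, pow_succ, mul_comm (x ^ i) x]
      exact mul_le_mul' (hAle ⟨i, hik'⟩) (ih (le_of_lt hik'))
  -- bound on the bad events
  have hbad : ∀ j : Fin k, μ ((evE G w D j \ evA G w D j) ∩ evC G w D (j : ℕ)) ≤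
      d * (x * x ^ (j : ℕ)) := by
    intro j
    have hsplit : μ (evE G w D j ∩ evC G w D (j : ℕ)) =
        μ ((evE G w D j ∩ evC G w D (j : ℕ)) ∩ evA G w D j) +
          μ ((evE G w D j ∩ evC G w D (j : ℕ)) \ evA G w D j) :=
      (measure_inter_add_diff₀ _ (hAnm j)).symm
    have h1 : (evE G w D j ∩ evC G w D (j : ℕ)) ∩ evA G w D j =
        evA G w D j ∩ evC G w D (j : ℕ) := by
      ext ω
      constructor
      · rintro ⟨⟨_, hcmem⟩, ha⟩
        exact ⟨ha, hcmem⟩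
      · rintro ⟨ha, hcmem⟩
        exact ⟨⟨evA_subset_evE hlf j ha, hcmem⟩, ha⟩
    have h2 : (evE G w D j ∩ evC G w D (j : ℕ)) \ evA G w D j =
        (evE G w D j \ evA G w D j) ∩ evC G w D (j : ℕ) := by
      ext ω
      simp only [Set.mem_diff, Set.mem_inter_iff]
      tauto
    rw [h1, h2, hprodE2 j, hprodA j] at hsplit
    have hofδ : ENNReal.ofReal (1 + δ) = 1 + d := by
      rw [hd, ENNReal.ofReal_add (by norm_num : (0:ℝ) ≤ 1) hδ0, ENNReal.ofReal_one]
    have hfin : μ (evA G w D j) * μ (evC G w D (j : ℕ)) ≠ ∞ :=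
      ENNReal.mul_ne_top (measure_ne_top μ _) (measure_ne_top μ _)
    have key : μ (evA G w D j) * μ (evC G w D (j : ℕ)) +
        μ ((evE G w D j \ evA G w D j) ∩ evC G w D (j : ℕ)) ≤
        μ (evA G w D j) * μ (evC G w D (j : ℕ)) +
          d * (μ (evA G w D j) * μ (evC G w D (j : ℕ))) := by
      rw [← hsplit]
      calc μ (evE G w D j) * μ (evC G w D (j : ℕ))
          ≤ (ENNReal.ofReal (1 + δ) * μ (evA G w D j)) * μ (evC G w D (j : ℕ)) :=
            mul_le_mul_left (hprobE j) _
        _ = μ (evA G w D j) * μ (evC G w D (j : ℕ)) +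
            d * (μ (evA G w D j) * μ (evC G w D (j : ℕ))) := by
            rw [hofδ]; ring
    have hcancel := (ENNReal.add_le_add_iff_left hfin).1 key
    refine hcancel.trans ?_
    refine mul_le_mul_right ?_ d
    exact mul_le_mul' (hAle j) (hCle (j : ℕ) (le_of_lt j.isLt))
  -- set-theoretic decomposition
  have hsubTgt : {ω : V → Bool | ∀ v ∈ S, ¬ ConnInfty G ω v} ⊆ ⋂ j : Fin k, evE G w D j := by
    intro ω hω
    refine Set.mem_iInter.2 fun j => ?_
    intro hCI
    refine hω (w j) (hmem j) ?_
    obtain ⟨hw1, hinf⟩ := hCI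
    refine ⟨hw1, hinf.mono ?_⟩
    intro u hu
    refine hu.mono ?_
    rintro a b ⟨hpadj, hoa, hob⟩
    exact ⟨hpadj.1, hoa, hob⟩
  have hdecomp : (⋂ j : Fin k, evE G w D j) ⊆
      evC G w D k ∪ ⋃ j : Fin k, ((evE G w D j \ evA G w D j) ∩ evC G w D (j : ℕ)) := by
    intro ω hω
    by_cases hall : ∀ j : Fin k, ω ∈ evA G w D j
    · left
      exact Set.mem_iInter.2 fun j => Set.mem_iInter.2 fun _ => hall j
    · right
      push_neg at hall
      have hex : ∃ n : ℕ, ∃ h : n < k, ω ∉ evA G w D ⟨n, h⟩ := by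
        obtain ⟨j, hj⟩ := hall
        exact ⟨(j : ℕ), j.isLt, by simpa using hj⟩
      obtain ⟨hn₀k, hn₀A⟩ := Nat.find_spec hex
      refine Set.mem_iUnion.2 ⟨⟨Nat.find hex, hn₀k⟩, ⟨⟨?_, hn₀A⟩, ?_⟩⟩
      · exact Set.mem_iInter.1 hω ⟨Nat.find hex, hn₀k⟩
      · refine Set.mem_iInter.2 fun l => Set.mem_iInter.2 fun hl => ?_
        by_contra hnl
        exact Nat.find_min hex hl ⟨l.isLt, by simpa using hnl⟩
  -- measure decomposition
  have hmeas1 : μ {ω : V → Bool | ∀ v ∈ S, ¬ ConnInfty G ω v} ≤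
      μ (evC G w D k) + ∑ j : Fin k, μ ((evE G w D j \ evA G w D j) ∩ evC G w D (j : ℕ)) := by
    calc μ {ω : V → Bool | ∀ v ∈ S, ¬ ConnInfty G ω v}
        ≤ μ (evC G w D k ∪ ⋃ j : Fin k,
            ((evE G w D j \ evA G w D j) ∩ evC G w D (j : ℕ))) :=
          measure_mono (hsubTgt.trans hdecomp)
      _ ≤ μ (evC G w D k) + μ (⋃ j : Fin k,
            ((evE G w D j \ evA G w D j) ∩ evC G w D (j : ℕ))) := measure_union_le _ _
      _ ≤ μ (evC G w D k) + ∑ j : Fin k,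
            μ ((evE G w D j \ evA G w D j) ∩ evC G w D (j : ℕ)) := by
          refine add_le_add le_rfl ?_
          refine (measure_iUnion_le _).trans ?_
          rw [tsum_fintype]
  -- numeric conclusion
  have hnum : μ (evC G w D k) + ∑ j : Fin k,
      μ ((evE G w D j \ evA G w D j) ∩ evC G w D (j : ℕ)) ≤
      x ^ k + d * (x * (1 - x)⁻¹) := by
    refine add_le_add (hCle k le_rfl) ?_
    calc ∑ j : Fin k, μ ((evE G w D j \ evA G w D j) ∩ evC G w D (j : ℕ))
        ≤ ∑ j : Fin k, d * (x * x ^ (j : ℕ)) := Finset.sum_le_sum fun j _ => hbad j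
      _ = d * ∑ j : Fin k, x * x ^ (j : ℕ) := by rw [Finset.mul_sum]
      _ ≤ d * (x * (1 - x)⁻¹) := by
          refine mul_le_mul_right ?_ d
          have h1 : ∑ j : Fin k, x * x ^ (j : ℕ) = ∑ i ∈ Finset.range k, x ^ (i + 1) := by
            rw [Fin.sum_univ_eq_sum_range (fun i => x * x ^ i) k]
            refine Finset.sum_congr rfl fun i _ => ?_
            rw [pow_succ, mul_comm]
          rw [h1]
          calc ∑ i ∈ Finset.range k, x ^ (i + 1) ≤ ∑' i : ℕ, x ^ (i + 1) :=
                ENNReal.sum_le_tsum _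
            _ = x * (1 - x)⁻¹ := ENNReal.tsum_geometric_add_one x
  have h1x : (1 : ℝ≥0∞) - x = ENNReal.ofReal c := by
    rw [hx]
    calc (1 : ℝ≥0∞) - ENNReal.ofReal (1 - c)
        = ENNReal.ofReal 1 - ENNReal.ofReal (1 - c) := by rw [ENNReal.ofReal_one]
      _ = ENNReal.ofReal (1 - (1 - c)) := (ENNReal.ofReal_sub 1 (by linarith)).symm
      _ = ENNReal.ofReal c := by norm_num
  have hfinal : x ^ k + d * (x * (1 - x)⁻¹) ≤
      ENNReal.ofReal (δ * (1 - c) / c + (1 + δ) * (1 - c) ^ k) := by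
    have hxk : x ^ k = ENNReal.ofReal ((1 - c) ^ k) := by
      rw [hx, ENNReal.ofReal_pow (by linarith)]
    have hdx : d * (x * (1 - x)⁻¹) = ENNReal.ofReal (δ * (1 - c) / c) := by
      rw [h1x, ← ENNReal.ofReal_inv_of_pos hc0, hx, hd,
        ← ENNReal.ofReal_mul (by linarith : (0:ℝ) ≤ 1 - c),
        ← ENNReal.ofReal_mul hδ0]
      congr 1
      field_simp
    rw [hxk, hdx, ← ENNReal.ofReal_add
      (pow_nonneg (by linarith : (0:ℝ) ≤ 1 - c) k)
      (div_nonneg (mul_nonneg hδ0 (by linarith)) (le_of_lt hc0))]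
    refine ENNReal.ofReal_le_ofReal ?_
    have hpk : (1 - c) ^ k ≤ (1 + δ) * (1 - c) ^ k := by
      nlinarith [pow_nonneg (by linarith : (0:ℝ) ≤ 1 - c) k]
    linarith
  exact hmeas1.trans (hnum.trans hfinal)

end Percolation
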